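/- For every θ ∈ (0,1) there is a constant C > 0 such that for all ε ∈ (0,1], all real N ≥ 1 with 2εN ≤ ε^θ, all t ≥ 0 and all z ∈ ℝ², | ∑_{n ∈ ℤ², ⟨n⟩ ≤ N} ( ε^{−4} ∫₀ᵗ e^{−s/ε²} · s² · φ( s²·λ_ε(⟨n⟩)² )² ds − ∫₀ᵗ e^{−2s⟨n⟩²} ds ) · e^{i n·z} | ≤ C·ε^{2θ}, where λ_ε(r) = √(1−4ε²r²)/(2ε²) and φ(x) = ∑_{j=0}^∞ x^j/(2j+1)!. -/

import Mathlib

set_option maxHeartbeats 1000000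


/-- The entire function `φ(x) = ∑_{j=0}^∞ x^j/(2j+1)!`. -/
noncomputable def phi (x : ℝ) : ℝ := ∑' j : ℕ, x ^ j / (Nat.factorial (2 * j + 1) : ℝ)

/-- The low-frequency damped-wave rate `λ_ε(r) = √(1−4ε²r²)/(2ε²)`. -/
noncomputable def lam (ε r : ℝ) : ℝ := Real.sqrt (1 - 4 * ε ^ 2 * r ^ 2) / (2 * ε ^ 2)

/-- The Japanese bracket `⟨n⟩ = (1+|n|²)^{1/2}` of a lattice point `n ∈ ℤ²`. -/
noncomputable def jb (n : ℤ × ℤ) : ℝ :=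
  Real.sqrt (1 + ((n.1 : ℝ) ^ 2 + (n.2 : ℝ) ^ 2))

/-- The pairing `n·z` of a lattice point with `z ∈ ℝ²`. -/
def dotZ (n : ℤ × ℤ) (z : ℝ × ℝ) : ℝ := (n.1 : ℝ) * z.1 + (n.2 : ℝ) * z.2

lemma mul_phi_eq_sinh (s l : ℝ) : (s * l) * phi (s ^ 2 * l ^ 2) = Real.sinh (s * l) := by
  rw [phi, Real.sinh_eq_tsum, ← tsum_mul_left]
  refine tsum_congr fun j => ?_
  rw [show s ^ 2 * l ^ 2 = (s * l) ^ 2 by ring, ← pow_mul, pow_succ]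
  ring

lemma sq_phi_eq (s l : ℝ) (hl : l ≠ 0) :
    s ^ 2 * (phi (s ^ 2 * l ^ 2)) ^ 2 = Real.sinh (s * l) ^ 2 / l ^ 2 := by
  rw [← mul_phi_eq_sinh s l]
  field_simp

lemma integral_exp_const_mul (c t : ℝ) (hc : c ≠ 0) :
    ∫ s in (0:ℝ)..t, Real.exp (c * s) = (Real.exp (c * t) - 1) / c := by
  have h : ∀ s : ℝ, HasDerivAt (fun u => Real.exp (c * u) / c) (Real.exp (c * s)) s := by
    intro s
    have h1 : HasDerivAt (fun u : ℝ => c * u) c s := by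
      simpa using (hasDerivAt_id s).const_mul c
    have h2 := ((Real.hasDerivAt_exp (c * s)).comp s h1).div_const c
    simpa [mul_div_assoc, mul_comm, mul_div_cancel_right₀, hc] using h2
  rw [intervalIntegral.integral_eq_sub_of_hasDerivAt (fun s _ => h s)
      ((Real.continuous_exp.comp (continuous_const.mul continuous_id)).intervalIntegrable 0 t)]
  simp
  ring

lemma exp_mul_sinh_sq (x y : ℝ) : Real.exp x * Real.sinh y ^ 2
    = (Real.exp (2*y + x) + Real.exp (-(2*y) + x) - 2 * Real.exp x) / 4 := by
  have h1 : Real.exp (2*y + x) = Real.exp y ^ 2 * Real.exp x := by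
    rw [pow_two, ← Real.exp_add, ← Real.exp_add]; ring_nf
  have h2 : Real.exp (-(2*y) + x) = Real.exp (-y) ^ 2 * Real.exp x := by
    rw [pow_two, ← Real.exp_add, ← Real.exp_add]; ring_nf
  have h3 : Real.exp y * Real.exp (-y) = 1 := by rw [← Real.exp_add]; simp
  rw [Real.sinh_eq, h1, h2]
  linear_combination (-(Real.exp x)/2) * h3

lemma contExpInt (c a b : ℝ) : IntervalIntegrable (fun s => Real.exp (c * s)) MeasureTheory.volume a b :=
  (Real.continuous_exp.comp (continuous_const.mul continuous_id)).intervalIntegrable a b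

lemma est (ε r t q sq μ ν a : ℝ) (hr : 1 ≤ r) (ht : 0 ≤ t)
    (hε2 : 0 < ε ^ 2)
    (hq0 : 0 < q) (h1q : 1 - q = 4 * ε ^ 2 * r ^ 2)
    (hsq0 : 0 < sq) (hsq1 : sq < 1) (hsq2 : sq ^ 2 = q)
    (hμ : μ * (2 * ε ^ 2) = 1 - sq) (hν : ν * (2 * ε ^ 2) = 1 + sq)
    (ha : a * (2 * ε ^ 2) = 1) :
    |((Real.exp (-(2 * μ) * t) - 1) / (-(2 * μ)) + (Real.exp (-(2 * ν) * t) - 1) / (-(2 * ν))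
        - 2 * ((Real.exp (-(2 * a) * t) - 1) / (-(2 * a)))) / q
      - (1 - Real.exp (-(2 * r ^ 2) * t)) / (2 * r ^ 2)|
    ≤ 8 * ε ^ 2 / q := by
  have hr0 : (0:ℝ) < r := lt_of_lt_of_le one_pos hr
  have hr2 : (0:ℝ) < r ^ 2 := pow_pos hr0 2
  have hq1 : q < 1 := by nlinarith
  have hμ0 : 0 < μ := by nlinarith
  have hν0 : 0 < ν := by nlinarith
  have ha0 : 0 < a := by nlinarith
  set X : ℝ := Real.exp (-(2 * μ) * t) with hXdef
  set Y : ℝ := Real.exp (-(2 * r ^ 2) * t) with hYdef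
  set Z : ℝ := Real.exp (-(2 * ν) * t) with hZdef
  set W : ℝ := Real.exp (-(2 * a) * t) with hWdef
  have hX0 : 0 < X := Real.exp_pos _
  have hY0 : 0 < Y := Real.exp_pos _
  have hZ0 : 0 < Z := Real.exp_pos _
  have hW0 : 0 < W := Real.exp_pos _
  have hX1 : X ≤ 1 := by
    rw [hXdef, show (1:ℝ) = Real.exp 0 from Real.exp_zero.symm]
    exact Real.exp_le_exp.mpr (by nlinarith)
  have hY1 : Y ≤ 1 := by
    rw [hYdef, show (1:ℝ) = Real.exp 0 from Real.exp_zero.symm]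
    exact Real.exp_le_exp.mpr (by nlinarith)
  have hZ1 : Z ≤ 1 := by
    rw [hZdef, show (1:ℝ) = Real.exp 0 from Real.exp_zero.symm]
    exact Real.exp_le_exp.mpr (by nlinarith)
  have hW1 : W ≤ 1 := by
    rw [hWdef, show (1:ℝ) = Real.exp 0 from Real.exp_zero.symm]
    exact Real.exp_le_exp.mpr (by nlinarith)
  -- key size relations
  have hμeq : μ * (1 + sq) = 2 * r ^ 2 := by nlinarith [hμ, hsq2, h1q]
  have hμr : r ^ 2 ≤ μ := by nlinarith [hμeq, mul_nonneg hμ0.le (by linarith : (0:ℝ) ≤ 1 - sq)]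
  have hμub : μ - r ^ 2 ≤ 4 * ε ^ 2 * r ^ 4 := by nlinarith [mul_nonneg (mul_nonneg (mul_nonneg hr2.le hsq0.le) (by linarith : (0:ℝ) ≤ 1 - sq)) (by linarith : (0:ℝ) ≤ 2 + sq)]
  -- exponential comparisons
  have hXY : X ≤ Y := Real.exp_le_exp.mpr (by nlinarith)
  have hYX2 : Y - X ≤ 2 * t * (μ - r ^ 2) * Y := by
    have hXfac : X = Y * Real.exp (-(2 * (μ - r ^ 2)) * t) := by
      rw [hXdef, hYdef, ← Real.exp_add]; congr 1; ring
    have hd : 1 - Real.exp (-(2 * (μ - r ^ 2)) * t) ≤ 2 * (μ - r ^ 2) * t := by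
      have := Real.add_one_le_exp (-(2 * (μ - r ^ 2)) * t); linarith
    calc Y - X = Y * (1 - Real.exp (-(2 * (μ - r ^ 2)) * t)) := by rw [hXfac]; ring
      _ ≤ Y * (2 * (μ - r ^ 2) * t) := mul_le_mul_of_nonneg_left hd hY0.le
      _ = 2 * t * (μ - r ^ 2) * Y := by ring
  have htY : 2 * r ^ 2 * t * Y ≤ 1 := by
    have h1 := Real.add_one_le_exp (2 * r ^ 2 * t)
    have h2 : Real.exp (2 * r ^ 2 * t) * Y = 1 := by
      rw [hYdef, ← Real.exp_add, show 2 * r ^ 2 * t + -(2 * r ^ 2) * t = 0 by ring,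
        Real.exp_zero]
    nlinarith [mul_le_mul_of_nonneg_right (show 2 * r ^ 2 * t ≤ Real.exp (2 * r ^ 2 * t) by linarith) hY0.le]
  have hYXub : Y - X ≤ 4 * ε ^ 2 * r ^ 2 := by
    have h3 : 2 * t * (μ - r ^ 2) * Y ≤ 2 * t * (4 * ε ^ 2 * r ^ 4) * Y := by
      have h4 := mul_le_mul_of_nonneg_left hμub
        (mul_nonneg (mul_nonneg (by norm_num : (0:ℝ) ≤ 2) ht) hY0.le)
      nlinarith [h4]
    have h5 : 2 * t * (4 * ε ^ 2 * r ^ 4) * Y = 4 * ε ^ 2 * r ^ 2 * (2 * r ^ 2 * t * Y) := by ring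
    have h6 : 4 * ε ^ 2 * r ^ 2 * (2 * r ^ 2 * t * Y) ≤ 4 * ε ^ 2 * r ^ 2 * 1 :=
      mul_le_mul_of_nonneg_left htY (by positivity)
    nlinarith [hYX2]
  -- bounds on the three g-values
  set A : ℝ := (1 - X) / (2 * μ) with hAdef
  set Bv : ℝ := (1 - Z) / (2 * ν) with hBdef
  set Cv : ℝ := (1 - W) / (2 * a) with hCdef
  set H : ℝ := (1 - Y) / (2 * r ^ 2) with hHdef
  have hB0 : 0 ≤ Bv := div_nonneg (by linarith) (by positivity)
  have hC0 : 0 ≤ Cv := div_nonneg (by linarith) (by positivity)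
  have hBub : Bv ≤ ε ^ 2 := by
    rw [hBdef, div_le_iff₀ (by positivity)]
    nlinarith
  have hCub : Cv ≤ ε ^ 2 := by
    rw [hCdef, div_le_iff₀ (by positivity)]
    nlinarith
  -- the split of A - q H
  have hμinv : 1 / (2 * μ) = (1 + sq) / (4 * r ^ 2) := by
    rw [div_eq_div_iff (by positivity) (by positivity)]
    linarith [hμeq]
  have hsplit : A - q * H
      = (1 + sq - 2 * q) * (1 - X) / (4 * r ^ 2) + q * (Y - X) / (2 * r ^ 2) := by
    rw [hAdef, hHdef, div_eq_mul_one_div (1 - X) (2 * μ), hμinv]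
    field_simp
    ring
  have hcoef0 : 0 ≤ 1 + sq - 2 * q := by nlinarith [mul_nonneg (by linarith : (0:ℝ) ≤ 1 - sq) (by linarith : (0:ℝ) ≤ 1 + 2 * sq)]
  have hcoefub : 1 + sq - 2 * q ≤ 12 * ε ^ 2 * r ^ 2 := by nlinarith
  have hp1a : 0 ≤ (1 + sq - 2 * q) * (1 - X) / (4 * r ^ 2) :=
    div_nonneg (mul_nonneg hcoef0 (by linarith)) (by positivity)
  have hp1b : (1 + sq - 2 * q) * (1 - X) / (4 * r ^ 2) ≤ 3 * ε ^ 2 := by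
    rw [div_le_iff₀ (by positivity)]
    have h7 := mul_le_mul hcoefub (by linarith : 1 - X ≤ 1) (by linarith) (by positivity : (0:ℝ) ≤ 12 * ε ^ 2 * r ^ 2)
    linarith [h7]
  have hp2a : 0 ≤ q * (Y - X) / (2 * r ^ 2) :=
    div_nonneg (mul_nonneg hq0.le (by linarith)) (by positivity)
  have hp2b : q * (Y - X) / (2 * r ^ 2) ≤ 2 * ε ^ 2 := by
    rw [div_le_iff₀ (by positivity)]
    have h8 := mul_le_mul hq1.le hYXub (by linarith) zero_le_one
    linarith [h8]
  have hAqH0 : 0 ≤ A - q * H := by rw [hsplit]; linarith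
  have hAqH5 : A - q * H ≤ 5 * ε ^ 2 := by rw [hsplit]; linarith
  -- assemble
  have hnum : |(A - q * H) + (Bv - 2 * Cv)| ≤ 8 * ε ^ 2 := by
    rw [abs_le]; constructor <;> linarith
  have hform : ((X - 1) / (-(2 * μ)) + (Z - 1) / (-(2 * ν))
        - 2 * ((W - 1) / (-(2 * a)))) / q - (1 - Y) / (2 * r ^ 2)
      = ((A - q * H) + (Bv - 2 * Cv)) / q := by
    rw [hAdef, hBdef, hCdef, hHdef]
    field_simp
    ring
  rw [hform, abs_div, abs_of_pos hq0]
  gcongr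

lemma key (ε r t : ℝ) (hε : 0 < ε) (hr : 1 ≤ r) (ht : 0 ≤ t)
    (hq : 4 * ε ^ 2 * r ^ 2 < 1) :
    |(∫ s in (0:ℝ)..t, Real.exp (-s / ε ^ 2) * s ^ 2 * (phi (s ^ 2 * lam ε r ^ 2)) ^ 2) / ε ^ 4
      - ∫ s in (0:ℝ)..t, Real.exp (-2 * s * r ^ 2)|
    ≤ 8 * ε ^ 2 / (1 - 4 * ε ^ 2 * r ^ 2) := by
  have hr0 : (0:ℝ) < r := lt_of_lt_of_le one_pos hr
  have hr2 : (0:ℝ) < r ^ 2 := pow_pos hr0 2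
  have hε2 : (0:ℝ) < ε ^ 2 := pow_pos hε 2
  have hε4 : (0:ℝ) < ε ^ 4 := pow_pos hε 4
  set q : ℝ := 1 - 4 * ε ^ 2 * r ^ 2 with hqdef
  have hq0 : 0 < q := by simp only [hqdef]; linarith
  have hq1 : q < 1 := by simp only [hqdef]; nlinarith
  set sq : ℝ := Real.sqrt q with hsqdef
  have hsq0 : 0 < sq := Real.sqrt_pos.mpr hq0
  have hsq2 : sq ^ 2 = q := Real.sq_sqrt hq0.le
  have hsq1 : sq < 1 := by nlinarith
  set l : ℝ := sq / (2 * ε ^ 2) with hldef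
  have hl0 : 0 < l := div_pos hsq0 (by positivity)
  have hlam : lam ε r = l := by rw [lam, hldef, hsqdef, hqdef]
  -- the three exponential rates
  set c1 : ℝ := 2 * l - 1 / ε ^ 2 with hc1def
  set c2 : ℝ := -(2 * l) - 1 / ε ^ 2 with hc2def
  set c3 : ℝ := -(1 / ε ^ 2) with hc3def
  have h2l : 2 * l = sq / ε ^ 2 := by rw [hldef]; field_simp
  have hc1neg : c1 < 0 := by
    rw [hc1def, h2l]
    rw [div_sub_div_same, div_neg_iff]
    right; constructor <;> [linarith; positivity]
  have hinv : 0 < 1 / ε ^ 2 := by positivity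
  have hc2neg : c2 < 0 := by rw [hc2def]; linarith
  have hc3neg : c3 < 0 := by rw [hc3def]; linarith
  -- pointwise identity for the integrand
  have hint : ∀ s : ℝ, Real.exp (-s / ε ^ 2) * s ^ 2 * (phi (s ^ 2 * lam ε r ^ 2)) ^ 2
      = (Real.exp (c1 * s) + Real.exp (c2 * s) - 2 * Real.exp (c3 * s)) / (4 * l ^ 2) := by
    intro s
    rw [hlam]
    have h1 := sq_phi_eq s l hl0.ne'
    have h2 := exp_mul_sinh_sq (-s / ε ^ 2) (s * l)
    have e1 : 2 * (s * l) + -s / ε ^ 2 = c1 * s := by rw [hc1def]; ring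
    have e2 : -(2 * (s * l)) + -s / ε ^ 2 = c2 * s := by rw [hc2def]; ring
    have e3 : -s / ε ^ 2 = c3 * s := by rw [hc3def]; ring
    calc Real.exp (-s / ε ^ 2) * s ^ 2 * (phi (s ^ 2 * l ^ 2)) ^ 2
        = Real.exp (-s / ε ^ 2) * Real.sinh (s * l) ^ 2 / l ^ 2 := by
          rw [mul_assoc, h1]; ring
      _ = (Real.exp (c1 * s) + Real.exp (c2 * s) - 2 * Real.exp (c3 * s)) / (4 * l ^ 2) := by
          rw [h2, e1, e2, e3]; ring
  -- compute the damped-wave integral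
  have hI : (∫ s in (0:ℝ)..t, Real.exp (-s / ε ^ 2) * s ^ 2 * (phi (s ^ 2 * lam ε r ^ 2)) ^ 2)
      = ((Real.exp (c1 * t) - 1) / c1 + (Real.exp (c2 * t) - 1) / c2
          - 2 * ((Real.exp (c3 * t) - 1) / c3)) / (4 * l ^ 2) := by
    simp only [hint]
    rw [intervalIntegral.integral_div]
    congr 1
    rw [intervalIntegral.integral_sub ((contExpInt c1 0 t).add (contExpInt c2 0 t))
        ((contExpInt c3 0 t).const_mul 2),
      intervalIntegral.integral_add (contExpInt c1 0 t) (contExpInt c2 0 t),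
      intervalIntegral.integral_const_mul,
      integral_exp_const_mul c1 t hc1neg.ne, integral_exp_const_mul c2 t hc2neg.ne,
      integral_exp_const_mul c3 t hc3neg.ne]
  -- compute the heat integral
  have hB : (∫ s in (0:ℝ)..t, Real.exp (-2 * s * r ^ 2))
      = (1 - Real.exp (-(2 * r ^ 2) * t)) / (2 * r ^ 2) := by
    have : ∀ s : ℝ, Real.exp (-2 * s * r ^ 2) = Real.exp ((-(2 * r ^ 2)) * s) := by
      intro s; congr 1; ring
    simp only [this]
    rw [integral_exp_const_mul _ t (by nlinarith : (-(2 * r ^ 2) : ℝ) ≠ 0)]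
    field_simp
    ring
  -- auxiliary facts to apply `est`
  set μ : ℝ := (1 - sq) / (2 * ε ^ 2) with hμdef
  set ν : ℝ := (1 + sq) / (2 * ε ^ 2) with hνdef
  set a : ℝ := 1 / (2 * ε ^ 2) with hadef
  have hc1μ : c1 = -(2 * μ) := by rw [hc1def, hμdef, hldef]; field_simp; ring
  have hc2ν : c2 = -(2 * ν) := by rw [hc2def, hνdef, hldef]; field_simp; ring
  have hc3a : c3 = -(2 * a) := by rw [hc3def, hadef]; field_simp
  have h4l : 4 * l ^ 2 * ε ^ 4 = q := by
    rw [hldef]; field_simp; linear_combination 4 * hsq2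
  rw [hI, hB, hc1μ, hc2ν, hc3a, div_div, h4l]
  exact est ε r t q sq μ ν a hr ht hε2 hq0 (by rw [hqdef]; ring) hsq0 hsq1 hsq2
    (by rw [hμdef]; field_simp) (by rw [hνdef]; field_simp) (by rw [hadef]; field_simp)

lemma one_le_jb (n : ℤ × ℤ) : 1 ≤ jb n := by
  rw [jb]
  have h := Real.sqrt_le_sqrt (show (1:ℝ) ≤ 1 + ((n.1:ℝ) ^ 2 + (n.2:ℝ) ^ 2) by
    nlinarith [sq_nonneg ((n.1:ℝ)), sq_nonneg ((n.2:ℝ))])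
  simpa using h

lemma jb_sq (n : ℤ × ℤ) : jb n ^ 2 = 1 + ((n.1 : ℝ) ^ 2 + (n.2 : ℝ) ^ 2) := by
  rw [jb, Real.sq_sqrt (by positivity)]

lemma coord_bound (x : ℤ) (N : ℝ) (hN : 1 ≤ N) (h : (x:ℝ) ^ 2 ≤ N ^ 2) :
    -⌈N⌉ ≤ x ∧ x ≤ ⌈N⌉ := by
  have habs : |(x:ℝ)| ≤ N := by nlinarith [abs_nonneg (x:ℝ), sq_abs (x:ℝ)]
  obtain ⟨h1, h2⟩ := abs_le.mp habs
  constructor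
  · have : (-⌈N⌉ : ℝ) ≤ (x : ℝ) := le_trans (by simpa using neg_le_neg (Int.le_ceil N)) h1
    exact_mod_cast this
  · have : (x : ℝ) ≤ (⌈N⌉ : ℝ) := le_trans h2 (Int.le_ceil N)
    exact_mod_cast this

lemma mem_box (n : ℤ × ℤ) (N : ℝ) (hN : 1 ≤ N) (h : jb n ≤ N) :
    n ∈ Finset.Icc ((-⌈N⌉, -⌈N⌉) : ℤ × ℤ) (⌈N⌉, ⌈N⌉) := by
  have hsq : jb n ^ 2 ≤ N ^ 2 := by
    have h0 : 0 ≤ jb n := le_trans zero_le_one (one_le_jb n)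
    nlinarith
  rw [jb_sq] at hsq
  have h1 := coord_bound n.1 N hN (by nlinarith [sq_nonneg ((n.2:ℝ))])
  have h2 := coord_bound n.2 N hN (by nlinarith [sq_nonneg ((n.1:ℝ))])
  rw [Finset.mem_Icc]
  exact ⟨⟨h1.1, h2.1⟩, ⟨h1.2, h2.2⟩⟩

lemma box_card (N : ℝ) (hN : 1 ≤ N) :
    ((Finset.Icc ((-⌈N⌉, -⌈N⌉) : ℤ × ℤ) (⌈N⌉, ⌈N⌉)).card : ℝ) ≤ 25 * N ^ 2 := by
  have hM1 : (1:ℤ) ≤ ⌈N⌉ := by exact_mod_cast Int.le_ceil_iff.mpr (by norm_num; linarith)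
  have e : ((Finset.Icc (-⌈N⌉) ⌈N⌉).card : ℤ) = 2 * ⌈N⌉ + 1 := by
    rw [Int.card_Icc_of_le _ _ (by omega)]; ring
  have hcard : ((Finset.Icc ((-⌈N⌉, -⌈N⌉) : ℤ × ℤ) (⌈N⌉, ⌈N⌉)).card : ℤ)
      = (2 * ⌈N⌉ + 1) * (2 * ⌈N⌉ + 1) := by
    rw [Finset.Icc_prod_def, Finset.card_product]
    push_cast
    rw [e]
  have hMN : (⌈N⌉ : ℝ) ≤ 2 * N := Int.ceil_le_two_mul (by linarith)
  have hcR : ((Finset.Icc ((-⌈N⌉, -⌈N⌉) : ℤ × ℤ) (⌈N⌉, ⌈N⌉)).card : ℝ)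
      = ((2 * (⌈N⌉:ℝ) + 1) * (2 * (⌈N⌉:ℝ) + 1)) := by exact_mod_cast hcard
  rw [hcR]
  have hM1R : (1:ℝ) ≤ (⌈N⌉:ℝ) := by exact_mod_cast hM1
  have h5 : 2 * (⌈N⌉:ℝ) + 1 ≤ 5 * N := by linarith
  nlinarith [mul_le_mul h5 h5 (by linarith : (0:ℝ) ≤ 2 * (⌈N⌉:ℝ) + 1) (by linarith : (0:ℝ) ≤ 5 * N)]

/-- For every `θ ∈ (0,1)` there is `C > 0` such that for all `ε ∈ (0,1]`, `N ≥ 1` with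
`2εN ≤ ε^θ`, `t ≥ 0` and `z ∈ ℝ²`, the truncated covariance functions of the damped-wave
and heat stochastic convolutions differ by at most `C ε^{2θ}`. -/
theorem dampedWave_heat_covariance_convergence (θ : ℝ) (hθ : θ ∈ Set.Ioo (0:ℝ) 1) :
    ∃ C : ℝ, 0 < C ∧ ∀ (ε N t : ℝ) (z : ℝ × ℝ), ε ∈ Set.Ioc (0:ℝ) 1 → 1 ≤ N →
      2 * ε * N ≤ ε ^ θ → 0 ≤ t →
      ‖∑' n : ℤ × ℤ,
        if jb n ≤ N then
          ((((∫ s in (0:ℝ)..t,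
              Real.exp (-s / ε ^ 2) * s ^ 2 * (phi (s ^ 2 * lam ε (jb n) ^ 2)) ^ 2) / ε ^ 4)
            - ∫ s in (0:ℝ)..t, Real.exp (-2 * s * jb n ^ 2) : ℝ) : ℂ) *
            Complex.exp (Complex.I * ((dotZ n z : ℝ) : ℂ))
        else 0‖ ≤ C * ε ^ (2 * θ) := by
  obtain ⟨hθ0, hθ1⟩ := hθ
  set p : ℝ := 2 * θ / (1 - θ) with hpdef
  have hp0 : 0 < p := by apply div_pos <;> linarith
  set K : ℝ := (1/2 : ℝ) ^ p with hKdef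
  have hK0 : 0 < K := Real.rpow_pos_of_pos (by norm_num) _
  have hK1 : K < 1 := Real.rpow_lt_one (by norm_num) (by norm_num) hp0
  refine ⟨200 / (1 - K), div_pos (by norm_num) (by linarith), ?_⟩
  rintro ε N t z ⟨hε0, hε1⟩ hN hεN ht
  have hεθ : (0:ℝ) < ε ^ θ := Real.rpow_pos_of_pos hε0 θ
  have hε1θ : (0:ℝ) < ε ^ (1 - θ) := Real.rpow_pos_of_pos hε0 (1 - θ)
  have h2ε : ε ^ (1 - θ) ≤ 1/2 := by
    have h1 : 2 * ε ≤ ε ^ θ := le_trans (by nlinarith) hεN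
    have h2 : ε ^ θ * ε ^ (1 - θ) = ε := by
      rw [← Real.rpow_add hε0]; norm_num
    nlinarith
  have hKb : ε ^ (2 * θ) ≤ K := by
    have h1θ : (1:ℝ) - θ ≠ 0 := by linarith
    have e1 : ε ^ (2 * θ) = (ε ^ (1 - θ)) ^ p := by
      rw [← Real.rpow_mul hε0.le]
      congr 1
      rw [hpdef]
      field_simp
    rw [e1, hKdef]
    exact Real.rpow_le_rpow hε1θ.le h2ε hp0.le
  have hsq : 4 * ε ^ 2 * N ^ 2 ≤ ε ^ (2 * θ) := by
    have h3 : (2 * ε * N) ^ 2 ≤ (ε ^ θ) ^ 2 := by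
      apply pow_le_pow_left₀ (by positivity) hεN
    have h4 : (ε ^ θ) ^ 2 = ε ^ (2 * θ) := by
      rw [← Real.rpow_natCast (ε ^ θ) 2, ← Real.rpow_mul hε0.le]
      congr 1
      push_cast
      ring
    nlinarith [h3, h4]
  -- the box
  set S : Finset (ℤ × ℤ) := Finset.Icc ((-⌈N⌉, -⌈N⌉) : ℤ × ℤ) (⌈N⌉, ⌈N⌉) with hSdef
  set f : ℤ × ℤ → ℂ := fun n =>
    if jb n ≤ N then
      ((((∫ s in (0:ℝ)..t,
          Real.exp (-s / ε ^ 2) * s ^ 2 * (phi (s ^ 2 * lam ε (jb n) ^ 2)) ^ 2) / ε ^ 4)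
        - ∫ s in (0:ℝ)..t, Real.exp (-2 * s * jb n ^ 2) : ℝ) : ℂ) *
        Complex.exp (Complex.I * ((dotZ n z : ℝ) : ℂ))
    else 0 with hfdef
  have hf0 : ∀ n ∉ S, f n = 0 := by
    intro n hn
    rw [hfdef]
    simp only [ite_eq_right_iff]
    intro hjb
    exact absurd (mem_box n N hN hjb) hn
  have habs : ‖∑' n, f n‖ ≤ ∑ n ∈ S, ‖f n‖ := by
    rw [tsum_eq_sum hf0]
    simpa using norm_sum_le S f
  have hterm : ∀ n ∈ S, ‖f n‖ ≤ 8 * ε ^ 2 / (1 - K) := by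
    intro n _
    rw [hfdef]
    by_cases hn : jb n ≤ N
    · simp only [hn, if_true]
      rw [norm_mul]
      have h1 : ‖Complex.exp (Complex.I * ((dotZ n z : ℝ) : ℂ))‖ = 1 := by
        rw [Complex.norm_exp]
        norm_num [Complex.mul_re]
      rw [h1, mul_one, Complex.norm_real, Real.norm_eq_abs]
      have hq4 : 4 * ε ^ 2 * (jb n) ^ 2 ≤ K := by
        have hjb1 : 1 ≤ jb n := one_le_jb n
        have hj2 : (jb n) ^ 2 ≤ N ^ 2 := by
          nlinarith [mul_le_mul hn hn (by linarith) (by linarith : (0:ℝ) ≤ N)]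
        have : 4 * ε ^ 2 * (jb n) ^ 2 ≤ 4 * ε ^ 2 * N ^ 2 := by nlinarith [sq_nonneg ε, hj2]
        linarith [hKb, hsq]
      have h2 := key ε (jb n) t hε0 (one_le_jb n) ht (lt_of_le_of_lt hq4 hK1)
      refine h2.trans ?_
      exact div_le_div_of_nonneg_left (by positivity) (by linarith) (by linarith)
    · simp only [hn, if_false]
      rw [norm_zero]
      exact div_nonneg (by positivity) (by linarith)
  have hsum : ∑ n ∈ S, ‖f n‖ ≤ S.card • (8 * ε ^ 2 / (1 - K)) :=
    Finset.sum_le_card_nsmul S _ _ hterm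
  have hcard := box_card N hN
  calc ‖∑' n, f n‖ ≤ ∑ n ∈ S, ‖f n‖ := habs
    _ ≤ S.card • (8 * ε ^ 2 / (1 - K)) := hsum
    _ = (S.card : ℝ) * (8 * ε ^ 2 / (1 - K)) := by rw [nsmul_eq_mul]
    _ ≤ 25 * N ^ 2 * (8 * ε ^ 2 / (1 - K)) := by
        exact mul_le_mul_of_nonneg_right hcard (div_nonneg (by positivity) (by linarith))
    _ = 50 * (4 * ε ^ 2 * N ^ 2) / (1 - K) := by ring
    _ ≤ 50 * ε ^ (2 * θ) / (1 - K) := by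
        apply (div_le_div_iff_of_pos_right (by linarith)).mpr
        linarith
    _ ≤ 200 / (1 - K) * ε ^ (2 * θ) := by
        rw [div_mul_eq_mul_div]
        apply (div_le_div_iff_of_pos_right (by linarith)).mpr
        have := Real.rpow_pos_of_pos hε0 (2 * θ)
        linarith
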